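/- Let α: G → Aut(A) be a tracially amenable action of a discrete group G on a separable unital C*-algebra A with T(A) ≠ ∅. Then the induced action of G on the trace space T(A) (a compact convex set with the weak-* topology) is topologically amenable. -/

import Mathlib

noncomputable section

variable {G : Type*} [Group G] {A : Type*} [CStarAlgebra A]

/-- A tracial state on a unital C*-algebra. -/
def IsTracialState (τ : A →ₗ[ℂ] ℂ) : Prop :=
  τ 1 = 1 ∧ (∀ a : A, 0 ≤ (τ (star a * a)).re ∧ (τ (star a * a)).im = 0) ∧
    ∀ a b : A, τ (a * b) = τ (b * a)

/-- The trace space `T(A)`. -/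
def TS (A : Type*) [CStarAlgebra A] : Type _ := {τ : A →ₗ[ℂ] ℂ // IsTracialState τ}

/-- The weak-* topology on the trace space. -/
instance : TopologicalSpace (TS A) :=
  TopologicalSpace.induced (fun τ : TS A => (τ.1 : A → ℂ)) inferInstance

/-- The inner product `⟨ξ,η⟩ = ∑_g ξ(g)* η(g)` on `C_c(G,A) ⊆ ℓ²(G,A)`. -/
def ip (ξ η : G →₀ A) : A := ξ.sum fun g a => star a * η g

/-- The uniform 2-seminorm on `A`. -/
def u2 (a : A) : ℝ := ⨆ τ : TS A, Real.sqrt ((τ.1 (star a * a)).re)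

/-- The uniform 2-seminorm on `ℓ²(G,A)`. -/
def u2l (ξ : G →₀ A) : ℝ := ⨆ τ : TS A, Real.sqrt ((τ.1 (ip ξ ξ)).re)

/-- Left multiplication `a·ξ`. -/
def lmul (a : A) (ξ : G →₀ A) : G →₀ A := ξ.mapRange (fun x => a * x) (by simp)

/-- Right multiplication `ξ·a`. -/
def rmul (ξ : G →₀ A) (a : A) : G →₀ A := ξ.mapRange (fun x => x * a) (by simp)

/-- The diagonal action `α̃_g(ξ)(h) = α_g(ξ(g⁻¹h))`. -/
def diagAct (α : G →* (A ≃ₐ[ℂ] A)) (g : G) (ξ : G →₀ A) : G →₀ A :=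
  (ξ.mapDomain fun h => g * h).mapRange (α g) (map_zero _)

/-- Tracial amenability of an action (Definition 2.2). -/
def IsTraciallyAmenable (α : G →* (A ≃ₐ[ℂ] A)) : Prop :=
  ∀ (F : Finset A) (K : Finset G) (ε : ℝ), 0 < ε →
    ∃ ξ : G →₀ A, Real.sqrt ‖ip ξ ξ‖ ≤ 1 ∧
      (∀ a ∈ F, u2l (rmul ξ a - lmul a ξ) < ε) ∧
      u2 (ip ξ ξ - 1) < ε ∧
      ∀ g ∈ K, u2l (diagAct α g ξ - ξ) < ε

/-- Topological amenability of an action `ρ` of a discrete group `G` on a compact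
space `X`, via finitely supported positive type functions `θ : G → C(X,ℝ)` with
`θ(e) ≤ 1` and `θ(g) → 1` uniformly (on compact `X`, `∀ x, |θ g x - 1| < ε` is
equivalent to `‖θ g - 1‖ < ε`). -/
def TopologicallyAmenableAction {G X : Type*} [Group G] [TopologicalSpace X]
    (ρ : G → X → X) : Prop :=
  ∀ (K : Finset G) (ε : ℝ), 0 < ε →
    ∃ (S : Finset G) (θ : G → C(X, ℝ)),
      (∀ g ∉ S, θ g = 0) ∧
      (∀ (L : Finset G) (x : X),
        Matrix.PosSemidef (Matrix.of fun g h : L => θ ((g : G)⁻¹ * h) (ρ (g : G)⁻¹ x))) ∧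
      (∀ x, θ 1 x ≤ 1) ∧
      ∀ g ∈ K, ∀ x, |θ g x - 1| < ε

set_option linter.unusedSectionVars false
set_option maxHeartbeats 1000000

namespace TAaux

section Sesq
variable {V : Type*} [AddCommGroup V] [Module ℂ V] {ι : Type*}

theorem B_conj (B : V → V → ℂ)
    (haddl : ∀ x y z, B (x + y) z = B x z + B y z)
    (haddr : ∀ x y z, B x (y + z) = B x y + B x z)
    (hsl : ∀ (c : ℂ) x y, B (c • x) y = (starRingEnd ℂ) c * B x y)
    (hsr : ∀ (c : ℂ) x y, B x (c • y) = c * B x y)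
    (him : ∀ x, (B x x).im = 0) (x y : V) :
    B y x = (starRingEnd ℂ) (B x y) := by
  have e1 : B (x + y) (x + y) = B x x + B x y + (B y x + B y y) := by
    rw [haddl, haddr, haddr]
  have e2 : B (x + Complex.I • y) (x + Complex.I • y)
      = B x x + Complex.I * B x y
        + ((starRingEnd ℂ) Complex.I * B y x
          + (starRingEnd ℂ) Complex.I * (Complex.I * B y y)) := by
    rw [haddl, haddr, haddr, hsl, hsl, hsr, hsr]
  have i1 := congrArg Complex.im e1
  have i2 := congrArg Complex.im e2
  rw [him (x + y)] at i1
  rw [him (x + Complex.I • y)] at i2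
  simp only [Complex.add_im, Complex.mul_im, Complex.mul_re, Complex.conj_I,
    Complex.neg_re, Complex.neg_im, Complex.I_re, Complex.I_im, him x, him y,
    neg_mul, one_mul, zero_mul, mul_zero, mul_one, neg_zero, add_zero, zero_add,
    zero_sub, sub_zero, neg_neg] at i1 i2
  apply Complex.ext
  · simp only [Complex.conj_re]; linarith
  · simp only [Complex.conj_im]; linarith

theorem B_cs (B : V → V → ℂ)
    (haddl : ∀ x y z, B (x + y) z = B x z + B y z)
    (haddr : ∀ x y z, B x (y + z) = B x y + B x z)
    (hsl : ∀ (c : ℂ) x y, B (c • x) y = (starRingEnd ℂ) c * B x y)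
    (hsr : ∀ (c : ℂ) x y, B x (c • y) = c * B x y)
    (him : ∀ x, (B x x).im = 0)
    (hre : ∀ x, 0 ≤ (B x x).re) (x y : V) :
    ‖B x y‖ ^ 2 ≤ (B x x).re * (B y y).re := by
  by_cases hz : B x y = 0
  · simp only [hz, norm_zero, map_zero, ne_eq, OfNat.ofNat_ne_zero, not_false_eq_true, zero_pow]
    exact mul_nonneg (hre x) (hre y)
  set z := B x y with hzdef
  have hq : B y x = (starRingEnd ℂ) z := B_conj B haddl haddr hsl hsr him x y
  have key : ∀ t : ℝ, 0 ≤ ((B x x).re * Complex.normSq z) * (t * t)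
      + (2 * Complex.normSq z) * t + (B y y).re := by
    intro t
    have h0 := hre (((t : ℂ) * z) • x + y)
    have e : B (((t : ℂ) * z) • x + y) (((t : ℂ) * z) • x + y)
        = (starRingEnd ℂ) ((t : ℂ) * z) * (((t : ℂ) * z) * B x x)
          + (starRingEnd ℂ) ((t : ℂ) * z) * B x y
          + (((t : ℂ) * z) * B y x + B y y) := by
      rw [haddl, haddr, haddr, hsl, hsl, hsr, hsr]
    rw [e, hq, ← hzdef] at h0
    have him_x := him x
    simp only [map_mul, Complex.conj_ofReal, Complex.add_re, Complex.mul_re,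
      Complex.mul_im, Complex.ofReal_re, Complex.ofReal_im, Complex.conj_re,
      Complex.conj_im, Complex.normSq_apply] at h0 ⊢
    nlinarith [h0, him_x]
  have hd := discrim_le_zero key
  rw [discrim] at hd
  have hN : 0 < Complex.normSq z := Complex.normSq_pos.2 hz
  have habs : ‖z‖ ^ 2 = Complex.normSq z := Complex.sq_norm z
  rw [habs]
  nlinarith [hd, hN]


theorem B_zero_left (B : V → V → ℂ)
    (hsl : ∀ (c : ℂ) x y, B (c • x) y = (starRingEnd ℂ) c * B x y) (y : V) :
    B 0 y = 0 := by simpa using hsl 0 0 y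

theorem B_zero_right (B : V → V → ℂ)
    (hsr : ∀ (c : ℂ) x y, B x (c • y) = c * B x y) (x : V) :
    B x 0 = 0 := by simpa using hsr 0 x 0

theorem B_sum_expand (B : V → V → ℂ)
    (haddl : ∀ x y z, B (x + y) z = B x z + B y z)
    (haddr : ∀ x y z, B x (y + z) = B x y + B x z)
    (hsl : ∀ (c : ℂ) x y, B (c • x) y = (starRingEnd ℂ) c * B x y)
    (hsr : ∀ (c : ℂ) x y, B x (c • y) = c * B x y)
    (s : Finset ι) (f : ι → V) (c : ι → ℂ) :
    B (∑ i ∈ s, c i • f i) (∑ j ∈ s, c j • f j)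
      = ∑ i ∈ s, ∑ j ∈ s, (starRingEnd ℂ) (c i) * (c j * B (f i) (f j)) := by
  classical
  have hl : ∀ (y : V) (t : Finset ι), B (∑ i ∈ t, c i • f i) y
      = ∑ i ∈ t, (starRingEnd ℂ) (c i) * B (f i) y := by
    intro y t
    induction t using Finset.induction_on with
    | empty => simpa using B_zero_left B hsl y
    | insert _ _ hni ih =>
      rw [Finset.sum_insert hni, haddl, hsl, ih, Finset.sum_insert hni]
  have hr : ∀ (x : V) (t : Finset ι), B x (∑ j ∈ t, c j • f j)
      = ∑ j ∈ t, c j * B x (f j) := by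
    intro x t
    induction t using Finset.induction_on with
    | empty => simpa using B_zero_right B hsr x
    | insert _ _ hni ih =>
      rw [Finset.sum_insert hni, haddr, hsr, ih, Finset.sum_insert hni]
  rw [hl]
  refine Finset.sum_congr rfl fun i _ => ?_
  rw [hr, Finset.mul_sum]


end Sesq

theorem ip_eq_sum (ξ η : G →₀ A) {s : Finset G} (hs : ξ.support ⊆ s) :
    ip ξ η = ∑ g ∈ s, star (ξ g) * η g :=
  Finsupp.sum_of_support_subset ξ hs _ (fun g _ => by simp)

theorem sum_starmul_exists {ι : Type*} (s : Finset ι) (f : ι → A) :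
    ∃ c : A, ∑ i ∈ s, star (f i) * f i = star c * c := by
  letI := CStarAlgebra.spectralOrder A
  haveI := CStarAlgebra.spectralOrderedRing A
  have hb : 0 ≤ ∑ i ∈ s, star (f i) * f i :=
    Finset.sum_nonneg fun i _ => star_mul_self_nonneg (f i)
  exact ⟨CFC.sqrt _, by
    rw [(IsSelfAdjoint.of_nonneg (CFC.sqrt_nonneg _)).star_eq, CFC.sqrt_mul_sqrt_self _ hb]⟩

theorem ip_self_exists (ξ : G →₀ A) : ∃ c : A, ip ξ ξ = star c * c := by
  rw [ip_eq_sum ξ ξ (Finset.Subset.refl _)]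
  exact sum_starmul_exists _ _

theorem ip_add_left (ξ₁ ξ₂ η : G →₀ A) : ip (ξ₁ + ξ₂) η = ip ξ₁ η + ip ξ₂ η := by
  classical
  rw [ip_eq_sum (ξ₁ + ξ₂) η Finsupp.support_add,
    ip_eq_sum ξ₁ η Finset.subset_union_left,
    ip_eq_sum ξ₂ η Finset.subset_union_right, ← Finset.sum_add_distrib]
  refine Finset.sum_congr rfl fun g _ => ?_
  rw [Finsupp.add_apply, star_add, add_mul]

theorem ip_add_right (ξ η₁ η₂ : G →₀ A) : ip ξ (η₁ + η₂) = ip ξ η₁ + ip ξ η₂ := by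
  rw [ip_eq_sum ξ (η₁ + η₂) (Finset.Subset.refl _), ip_eq_sum ξ η₁ (Finset.Subset.refl _),
    ip_eq_sum ξ η₂ (Finset.Subset.refl _), ← Finset.sum_add_distrib]
  refine Finset.sum_congr rfl fun g _ => ?_
  rw [Finsupp.add_apply, mul_add]

theorem ip_sub_right (ξ η₁ η₂ : G →₀ A) : ip ξ (η₁ - η₂) = ip ξ η₁ - ip ξ η₂ := by
  rw [ip_eq_sum ξ (η₁ - η₂) (Finset.Subset.refl _), ip_eq_sum ξ η₁ (Finset.Subset.refl _),
    ip_eq_sum ξ η₂ (Finset.Subset.refl _), ← Finset.sum_sub_distrib]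
  refine Finset.sum_congr rfl fun g _ => ?_
  rw [Finsupp.sub_apply, mul_sub]

theorem ip_smul_left (c : ℂ) (ξ η : G →₀ A) :
    ip (c • ξ) η = (starRingEnd ℂ) c • ip ξ η := by
  rw [ip_eq_sum (c • ξ) η (Finsupp.support_smul), ip_eq_sum ξ η (Finset.Subset.refl _),
    Finset.smul_sum]
  refine Finset.sum_congr rfl fun g _ => ?_
  rw [Finsupp.smul_apply, star_smul, smul_mul_assoc]
  rfl

theorem ip_smul_right (c : ℂ) (ξ η : G →₀ A) :
    ip ξ (c • η) = c • ip ξ η := by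
  rw [ip_eq_sum ξ (c • η) (Finset.Subset.refl _), ip_eq_sum ξ η (Finset.Subset.refl _),
    Finset.smul_sum]
  refine Finset.sum_congr rfl fun g _ => ?_
  rw [Finsupp.smul_apply, mul_smul_comm]

theorem diagAct_apply (α : G →* (A ≃ₐ[ℂ] A)) (g : G) (ξ : G →₀ A) (h : G) :
    diagAct α g ξ h = α g (ξ (g⁻¹ * h)) := by
  rw [diagAct, Finsupp.mapRange_apply]
  congr 1
  conv_lhs => rw [show h = g * (g⁻¹ * h) by group]
  exact Finsupp.mapDomain_apply (mul_right_injective g) ξ _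

theorem diagAct_support (α : G →* (A ≃ₐ[ℂ] A)) (g : G) (ξ : G →₀ A) [DecidableEq G] :
    (diagAct α g ξ).support ⊆ ξ.support.image (fun h => g * h) := by
  intro h hh
  rw [Finsupp.mem_support_iff, diagAct_apply] at hh
  have : ξ (g⁻¹ * h) ≠ 0 := fun h0 => hh (by rw [h0, map_zero])
  exact Finset.mem_image.2 ⟨g⁻¹ * h, Finsupp.mem_support_iff.2 this, by group⟩

theorem diagAct_one (α : G →* (A ≃ₐ[ℂ] A)) (ξ : G →₀ A) : diagAct α 1 ξ = ξ := by
  ext h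
  rw [diagAct_apply, map_one]
  simp

theorem ip_diagAct (α : G →* (A ≃ₐ[ℂ] A))
    (hstar : ∀ (g : G) (a : A), α g (star a) = star (α g a))
    (g k : G) (ξ : G →₀ A) :
    ip (diagAct α g ξ) (diagAct α (g * k) ξ) = α g (ip ξ (diagAct α k ξ)) := by
  classical
  rw [ip_eq_sum _ _ (diagAct_support α g ξ), ip_eq_sum ξ _ (Finset.Subset.refl _), map_sum,
    Finset.sum_image (fun a _ b _ h => mul_left_cancel h)]
  refine Finset.sum_congr rfl fun m _ => ?_
  rw [map_mul (α g), hstar, diagAct_apply α g ξ, diagAct_apply α (g * k) ξ,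
    diagAct_apply α k ξ, inv_mul_cancel_left]
  congr 1
  rw [show (g * k)⁻¹ * (g * m) = k⁻¹ * m by group, ← AlgEquiv.mul_apply, ← map_mul α g k]

open Pointwise in
theorem ip_diagAct_eq_zero (α : G →* (A ≃ₐ[ℂ] A)) (g : G) (ξ : G →₀ A) [DecidableEq G]
    (hg : g ∉ ξ.support * ξ.support⁻¹) : ip ξ (diagAct α g ξ) = 0 := by
  rw [ip_eq_sum ξ _ (Finset.Subset.refl _)]
  refine Finset.sum_eq_zero fun h hh => ?_
  rw [diagAct_apply]
  have : ξ (g⁻¹ * h) = 0 := by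
    by_contra hne
    exact hg (Finset.mem_mul.2 ⟨h, hh, (g⁻¹ * h)⁻¹,
      Finset.mem_inv.2 ⟨g⁻¹ * h, Finsupp.mem_support_iff.2 hne, rfl⟩, by group⟩)
  rw [this, map_zero, mul_zero]

theorem trace_re_le_norm (τ : TS A) (b c : A) (hb : b = star c * c) :
    (τ.1 b).re ≤ ‖b‖ := by
  obtain ⟨d, hd⟩ : ∃ d : A, algebraMap ℝ A ‖b‖ - b = star d * d := by
    letI := CStarAlgebra.spectralOrder A
    haveI := CStarAlgebra.spectralOrderedRing A
    have hb0 : 0 ≤ b := hb ▸ star_mul_self_nonneg c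
    have h1 : b ≤ algebraMap ℝ A ‖b‖ :=
      IsSelfAdjoint.le_algebraMap_norm_self (IsSelfAdjoint.of_nonneg hb0)
    have h2 : 0 ≤ algebraMap ℝ A ‖b‖ - b := sub_nonneg.2 h1
    exact ⟨CFC.sqrt _, by
      rw [(IsSelfAdjoint.of_nonneg (CFC.sqrt_nonneg _)).star_eq, CFC.sqrt_mul_sqrt_self _ h2]⟩
  have h2 : 0 ≤ (τ.1 (star d * d)).re := (τ.2.2.1 d).1
  rw [← hd, map_sub] at h2
  have h3 : τ.1 (algebraMap ℝ A ‖b‖) = (‖b‖ : ℂ) := by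
    rw [IsScalarTower.algebraMap_apply ℝ ℂ A, Algebra.algebraMap_eq_smul_one, map_smul, τ.2.1]
    simp
  rw [h3] at h2
  simp only [Complex.sub_re, Complex.ofReal_re] at h2
  linarith


end TAaux

open Pointwise

/-- Theorem 3.4, (1) ⟹ (4): a tracially amenable action of a discrete
group on a separable unital C*-algebra with `T(A) ≠ ∅` induces a topologically
amenable action `g·τ = τ ∘ α_{g⁻¹}` on the trace space `T(A)`. -/
theorem topologicallyAmenable_of_traciallyAmenable
    [TopologicalSpace.SeparableSpace A]
    (α : G →* (A ≃ₐ[ℂ] A))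
    (hstar : ∀ (g : G) (a : A), α g (star a) = star (α g a))
    (hT : Nonempty (TS A))
    (hTA : IsTraciallyAmenable α)
    (ρ : G → TS A → TS A)
    (hρ : ∀ (g : G) (τ : TS A) (a : A), (ρ g τ).1 a = τ.1 (α g⁻¹ a)) :
    TopologicallyAmenableAction ρ := by
  classical
  -- sesquilinear form properties of (a, b) ↦ τ (star a * b)
  have haddl1 : ∀ (τ : TS A) (x y z : A),
      τ.1 (star (x + y) * z) = τ.1 (star x * z) + τ.1 (star y * z) := fun τ x y z => by
    rw [star_add, add_mul, map_add]
  have haddr1 : ∀ (τ : TS A) (x y z : A),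
      τ.1 (star x * (y + z)) = τ.1 (star x * y) + τ.1 (star x * z) := fun τ x y z => by
    rw [mul_add, map_add]
  have hsl1 : ∀ (τ : TS A) (c : ℂ) (x y : A),
      τ.1 (star (c • x) * y) = (starRingEnd ℂ) c * τ.1 (star x * y) := fun τ c x y => by
    rw [star_smul, smul_mul_assoc, map_smul, smul_eq_mul]
    rfl
  have hsr1 : ∀ (τ : TS A) (c : ℂ) (x y : A),
      τ.1 (star x * (c • y)) = c * τ.1 (star x * y) := fun τ c x y => by
    rw [mul_smul_comm, map_smul, smul_eq_mul]
  -- Cauchy–Schwarz for the state: |τ y|² ≤ τ(y* y).re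
  have habs1 : ∀ (τ : TS A) (y : A),
      ‖τ.1 y‖ ^ 2 ≤ (τ.1 (star y * y)).re := by
    intro τ y
    have h := TAaux.B_cs (fun a b => τ.1 (star a * b)) (haddl1 τ) (haddr1 τ) (hsl1 τ)
      (hsr1 τ) (fun a => (τ.2.2.1 a).2) (fun a => (τ.2.2.1 a).1) 1 y
    simpa [star_one, one_mul, τ.2.1] using h
  -- sesquilinear form properties of (ξ, η) ↦ τ (ip ξ η)
  have haddl2 : ∀ (τ : TS A) (a b c : G →₀ A),
      τ.1 (ip (a + b) c) = τ.1 (ip a c) + τ.1 (ip b c) := fun τ a b c => by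
    rw [TAaux.ip_add_left, map_add]
  have haddr2 : ∀ (τ : TS A) (a b c : G →₀ A),
      τ.1 (ip a (b + c)) = τ.1 (ip a b) + τ.1 (ip a c) := fun τ a b c => by
    rw [TAaux.ip_add_right, map_add]
  have hsl2 : ∀ (τ : TS A) (c : ℂ) (a b : G →₀ A),
      τ.1 (ip (c • a) b) = (starRingEnd ℂ) c * τ.1 (ip a b) := fun τ c a b => by
    rw [TAaux.ip_smul_left, map_smul, smul_eq_mul]
  have hsr2 : ∀ (τ : TS A) (c : ℂ) (a b : G →₀ A),
      τ.1 (ip a (c • b)) = c * τ.1 (ip a b) := fun τ c a b => by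
    rw [TAaux.ip_smul_right, map_smul, smul_eq_mul]
  have hip_pos : ∀ (τ : TS A) (ζ : G →₀ A),
      0 ≤ (τ.1 (ip ζ ζ)).re ∧ (τ.1 (ip ζ ζ)).im = 0 := by
    intro τ ζ
    obtain ⟨c, hc⟩ := TAaux.ip_self_exists ζ
    rw [hc]
    exact τ.2.2.1 c
  have hip_conj : ∀ (τ : TS A) (ζ η : G →₀ A),
      τ.1 (ip η ζ) = (starRingEnd ℂ) (τ.1 (ip ζ η)) := fun τ ζ η =>
    TAaux.B_conj (fun a b => τ.1 (ip a b)) (haddl2 τ) (haddr2 τ) (hsl2 τ) (hsr2 τ)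
      (fun a => (hip_pos τ a).2) ζ η
  have hip_cs : ∀ (τ : TS A) (ζ η : G →₀ A),
      ‖τ.1 (ip ζ η)‖ ^ 2 ≤ (τ.1 (ip ζ ζ)).re * (τ.1 (ip η η)).re := fun τ ζ η =>
    TAaux.B_cs (fun a b => τ.1 (ip a b)) (haddl2 τ) (haddr2 τ) (hsl2 τ) (hsr2 τ)
      (fun a => (hip_pos τ a).2) (fun a => (hip_pos τ a).1) ζ η
  -- norm bounds
  have hnorm_ip : ∀ (τ : TS A) (ζ : G →₀ A), (τ.1 (ip ζ ζ)).re ≤ ‖ip ζ ζ‖ := by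
    intro τ ζ
    obtain ⟨c, hc⟩ := TAaux.ip_self_exists ζ
    exact TAaux.trace_re_le_norm τ _ c hc
  have hnorm_sq : ∀ (τ : TS A) (a : A), (τ.1 (star a * a)).re ≤ ‖star a * a‖ :=
    fun τ a => TAaux.trace_re_le_norm τ _ a rfl
  have hu2 : ∀ (a : A) (τ : TS A), Real.sqrt ((τ.1 (star a * a)).re) ≤ u2 a := by
    intro a τ
    exact le_ciSup ⟨Real.sqrt ‖star a * a‖, by
      rintro y ⟨σ, rfl⟩; exact Real.sqrt_le_sqrt (hnorm_sq σ a)⟩ τ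
  have hu2l : ∀ (ζ : G →₀ A) (τ : TS A), Real.sqrt ((τ.1 (ip ζ ζ)).re) ≤ u2l ζ := by
    intro ζ τ
    exact le_ciSup ⟨Real.sqrt ‖ip ζ ζ‖, by
      rintro y ⟨σ, rfl⟩; exact Real.sqrt_le_sqrt (hnorm_ip σ ζ)⟩ τ
  intro K ε hε
  obtain ⟨ξ, hξ1, -, hξ3, hξ4⟩ := hTA ∅ K (ε / 2) (by linarith)
  have hξnorm : ‖ip ξ ξ‖ ≤ 1 := by
    nlinarith [Real.sq_sqrt (norm_nonneg (ip ξ ξ)), Real.sqrt_nonneg ‖ip ξ ξ‖, hξ1]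
  refine ⟨ξ.support * ξ.support⁻¹,
    fun g => ⟨fun τ => (τ.1 (ip ξ (diagAct α g ξ))).re,
      Complex.continuous_re.comp ((continuous_apply _).comp continuous_induced_dom)⟩,
    ?_, ?_, ?_, ?_⟩
  · -- finite support
    intro g hg
    ext τ
    simp only [ContinuousMap.coe_mk, ContinuousMap.zero_apply]
    rw [TAaux.ip_diagAct_eq_zero α g ξ hg, map_zero, Complex.zero_re]
  · -- positive type
    intro L x
    have entry : ∀ g h : G,
        ((ρ g⁻¹ x).1 (ip ξ (diagAct α (g⁻¹ * h) ξ))).re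
          = (x.1 (ip (diagAct α g ξ) (diagAct α h ξ))).re := by
      intro g h
      rw [hρ, inv_inv, ← TAaux.ip_diagAct α hstar g (g⁻¹ * h) ξ, mul_inv_cancel_left]
    refine Matrix.PosSemidef.of_dotProduct_mulVec_nonneg (Matrix.ext fun i j => ?_) fun v => ?_
    · -- Hermitian
      simp only [Matrix.conjTranspose_apply, Matrix.of_apply, star_trivial,
        ContinuousMap.coe_mk]
      rw [entry, entry, hip_conj x, Complex.conj_re]
    · -- quadratic form nonnegative
      set ζ : G →₀ A := ∑ i : L, ((v i : ℝ) : ℂ) • diagAct α (i : G) ξ with hζdef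
      have hexp := TAaux.B_sum_expand (fun a b => x.1 (ip a b)) (haddl2 x) (haddr2 x)
        (hsl2 x) (hsr2 x) Finset.univ (fun i : L => diagAct α (i : G) ξ)
        (fun i => ((v i : ℝ) : ℂ))
      have h2 := congrArg Complex.re hexp
      simp only [Complex.re_sum, Complex.conj_ofReal, Complex.re_ofReal_mul] at h2
      refine le_of_le_of_eq (hip_pos x ζ).1 ?_
      rw [hζdef, h2]
      simp only [dotProduct, Matrix.mulVec, Matrix.of_apply, Pi.star_apply,
        star_trivial, ContinuousMap.coe_mk]
      refine Finset.sum_congr rfl fun i _ => ?_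
      rw [Finset.mul_sum]
      refine Finset.sum_congr rfl fun j _ => ?_
      rw [entry]
      ring
  · -- θ 1 ≤ 1
    intro τ
    simp only [ContinuousMap.coe_mk]
    rw [TAaux.diagAct_one]
    exact le_trans (hnorm_ip τ ξ) hξnorm
  · -- approximation
    intro g hg τ
    simp only [ContinuousMap.coe_mk]
    have hη := hξ4 g hg
    set η := diagAct α g ξ with hηdef
    have hdec : (τ.1 (ip ξ η)).re - 1
        = (τ.1 (ip ξ (η - ξ))).re + (τ.1 (ip ξ ξ - 1)).re := by
      have h1 : τ.1 (ip ξ (η - ξ)) + τ.1 (ip ξ ξ - 1) = τ.1 (ip ξ η) - 1 := by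
        rw [TAaux.ip_sub_right, map_sub, map_sub, τ.2.1]; ring
      have := congrArg Complex.re h1
      simp only [Complex.add_re, Complex.sub_re, Complex.one_re] at this
      linarith
    have hξξ1 : (τ.1 (ip ξ ξ)).re ≤ 1 := le_trans (hnorm_ip τ ξ) hξnorm
    have hp : ‖τ.1 (ip ξ (η - ξ))‖ ≤ Real.sqrt ((τ.1 (ip (η - ξ) (η - ξ))).re) := by
      have h0 := (hip_pos τ (η - ξ)).1
      have h0' := (hip_pos τ ξ).1
      have hcs := hip_cs τ ξ (η - ξ)
      calc ‖τ.1 (ip ξ (η - ξ))‖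
          = Real.sqrt (‖τ.1 (ip ξ (η - ξ))‖ ^ 2) :=
            (Real.sqrt_sq (norm_nonneg _)).symm
        _ ≤ Real.sqrt ((τ.1 (ip (η - ξ) (η - ξ))).re) :=
            Real.sqrt_le_sqrt (by nlinarith)
    have hq : ‖τ.1 (ip ξ ξ - 1)‖
        ≤ Real.sqrt ((τ.1 (star (ip ξ ξ - 1) * (ip ξ ξ - 1))).re) := by
      have hcs := habs1 τ (ip ξ ξ - 1)
      calc ‖τ.1 (ip ξ ξ - 1)‖
          = Real.sqrt (‖τ.1 (ip ξ ξ - 1)‖ ^ 2) :=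
            (Real.sqrt_sq (norm_nonneg _)).symm
        _ ≤ _ := Real.sqrt_le_sqrt hcs
    have hpu := le_trans hp (hu2l (η - ξ) τ)
    have hqu := le_trans hq (hu2 (ip ξ ξ - 1) τ)
    have habs : |(τ.1 (ip ξ η)).re - 1|
        ≤ ‖τ.1 (ip ξ (η - ξ))‖ + ‖τ.1 (ip ξ ξ - 1)‖ := by
      rw [hdec]
      exact le_trans (abs_add_le _ _)
        (add_le_add (Complex.abs_re_le_norm _) (Complex.abs_re_le_norm _))
    have := hξ3
    linarith
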